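/- For λ > 0 and δ ≥ 1, one has -e^{-λ}/2 + Σ_{n=1}^∞ (-1)^{n+1} e^{-λn/δ} = (2e^{-λ/δ} - e^{-λ} - e^{-λ - λ/δ}) / (2(1 + e^{-λ/δ})), and this quantity is nonnegative. -/
import Mathlib


theorem series_identity_K (lam delta : ℝ) (hlam : 0 < lam) (hdelta : 1 ≤ delta) :
    ∃ S : ℝ,
      HasSum (fun n : ℕ => (-1 : ℝ) ^ n * Real.exp (-(lam * ((n : ℝ) + 1)) / delta)) S ∧
      -Real.exp (-lam) / 2 + S =
        (2 * Real.exp (-lam / delta) - Real.exp (-lam) - Real.exp (-lam - lam / delta)) /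
          (2 * (1 + Real.exp (-lam / delta))) ∧
      0 ≤ -Real.exp (-lam) / 2 + S := by
  set q : ℝ := Real.exp (-lam / delta) with hq
  have hq0 : 0 < q := Real.exp_pos _
  have hq1 : q < 1 := by
    rw [hq, Real.exp_lt_one_iff]
    have hd : 0 < delta := lt_of_lt_of_le one_pos hdelta
    exact div_neg_of_neg_of_pos (neg_neg_of_pos hlam) hd
  have habs : |(-q)| < 1 := by rw [abs_neg, abs_of_pos hq0]; exact hq1
  have hgeo : HasSum (fun n : ℕ => (-q) ^ n) (1 - (-q))⁻¹ := hasSum_geometric_of_abs_lt_one habs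
  have hgeo2 : HasSum (fun n : ℕ => q * (-q) ^ n) (q * (1 - (-q))⁻¹) := hgeo.mul_left q
  have heq : (fun n : ℕ => q * (-q) ^ n) =
      fun n : ℕ => (-1 : ℝ) ^ n * Real.exp (-(lam * ((n : ℝ) + 1)) / delta) := by
    funext n
    have : Real.exp (-(lam * ((n : ℝ) + 1)) / delta) = q ^ (n + 1) := by
      rw [hq, ← Real.exp_nat_mul]
      congr 1
      push_cast
      ring
    rw [this, neg_pow, pow_succ]
    ring
  rw [heq] at hgeo2
  refine ⟨q * (1 - (-q))⁻¹, hgeo2, ?_, ?_⟩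
  · have h1 : Real.exp (-lam - lam / delta) = Real.exp (-lam) * q := by
      rw [hq, ← Real.exp_add]; ring_nf
    rw [h1]
    have h2 : (1 : ℝ) - (-q) = 1 + q := by ring
    rw [h2]
    have h3 : (0 : ℝ) < 1 + q := by linarith
    field_simp
    ring
  · have hel : Real.exp (-lam) ≤ q := by
      rw [hq]
      apply Real.exp_le_exp.mpr
      rw [le_div_iff₀ (lt_of_lt_of_le one_pos hdelta)]
      nlinarith
    have hel1 : Real.exp (-lam) ≤ 1 := by
      rw [Real.exp_le_one_iff]; linarith
    have h3 : (0 : ℝ) < 1 + q := by linarith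
    have : q * (1 - (-q))⁻¹ = q / (1 + q) := by
      rw [div_eq_mul_inv]; ring_nf
    rw [this]
    have key : 0 ≤ (2 * q - Real.exp (-lam) * (1 + q)) / (2 * (1 + q)) := by
      apply div_nonneg _ (by linarith)
      nlinarith [Real.exp_pos (-lam)]
    have heq2 : -Real.exp (-lam) / 2 + q / (1 + q) =
        (2 * q - Real.exp (-lam) * (1 + q)) / (2 * (1 + q)) := by
      field_simp
      ring
    linarith
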